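/- Let H be a complex Hilbert space. Let D : H → H be a bounded self-adjoint invertible operator, ψ ∈ H a unit vector with D ψ = λ_D • ψ for some real λ_D < 0, and ω > 0 such that Re ⟪D v, v⟫ ≥ ω ‖v‖² for every v orthogonal to ψ. Let C : H → H be a bounded self-adjoint positive semidefinite operator (Re ⟪C u, u⟫ ≥ 0 for all u). Let f : ℝ → ℝ be continuous and monotone nondecreasing with f(t) ≥ β₋ for all t ∈ ℝ, where β₋ > 0, and set M := cfc f D. If λ ∈ ℂ is a non-real eigenvalue of the block operator L(p, q) = (D q, −C p − M q) on H × H, then Re λ ≤ −f(λ_D)/2 ≤ −β₋/2. -/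

import Mathlib

open scoped InnerProductSpace

section Aux

variable {H : Type*} [NormedAddCommGroup H] [InnerProductSpace ℂ H] [CompleteSpace H]

private lemma aux_isUnit_of_bddBelow (T : H →L[ℂ] H) (hT : IsSelfAdjoint T)
    {c : ℝ} (hc : 0 < c) (hbd : ∀ v, c * ‖v‖ ≤ ‖T v‖) : IsUnit T := by
  rw [ContinuousLinearMap.isUnit_iff_bijective,
    ContinuousLinearMap.bijective_iff_dense_range_and_antilipschitz]
  have hanti : AntilipschitzWith (⟨c, hc.le⟩ : NNReal)⁻¹ T := by
    refine T.antilipschitz_of_bound fun x => ?_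
    show ‖x‖ ≤ c⁻¹ * ‖T x‖
    rw [inv_mul_eq_div, le_div_iff₀ hc, mul_comm]
    exact hbd x
  refine ⟨?_, ⟨_, hanti⟩⟩
  have := hanti.completeSpace_range_clm
  rw [Submodule.topologicalClosure_eq_top_iff, Submodule.eq_bot_iff]
  intro x hx
  have h0 : ⟪T (T x), x⟫_ℂ = 0 := hx _ ⟨T x, rfl⟩
  have h1 : ⟪T x, T x⟫_ℂ = 0 := by
    have hs : ⟪T (T x), x⟫_ℂ = ⟪T x, T x⟫_ℂ := hT.isSymmetric (T x) x
    rw [← hs]; exact h0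
  have hTx : T x = 0 := inner_self_eq_zero.mp h1
  have h2 := hbd x
  rw [hTx, norm_zero] at h2
  have h3 : ‖x‖ = 0 := le_antisymm (by nlinarith [norm_nonneg x]) (norm_nonneg x)
  exact norm_eq_zero.mp h3

private lemma aux_inner_real (T : H →L[ℂ] H) (hT : IsSelfAdjoint T) (x : H) :
    ⟪x, T x⟫_ℂ = ((⟪x, T x⟫_ℂ).re : ℂ) := by
  have hs : ⟪T x, x⟫_ℂ = ⟪x, T x⟫_ℂ := hT.isSymmetric x x
  have hconj : (starRingEnd ℂ) ⟪x, T x⟫_ℂ = ⟪x, T x⟫_ℂ := by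
    rw [inner_conj_symm]; exact hs
  exact (Complex.conj_eq_iff_re.mp hconj).symm

private lemma aux_pos_inner_zero (C : H →L[ℂ] H) (hC : IsSelfAdjoint C)
    (hCpos : ∀ u : H, 0 ≤ (⟪u, C u⟫_ℂ).re) (x : H) (hx : ⟪x, C x⟫_ℂ = 0) : C x = 0 := by
  set u := C x with hu
  set L : ℝ := ‖C x‖ ^ 2 with hL
  set K : ℝ := (⟪u, C u⟫_ℂ).re with hK
  have hKnn : 0 ≤ K := hCpos u
  have hsym : ∀ a b : H, ⟪C a, b⟫_ℂ = ⟪a, C b⟫_ℂ := fun a b => hC.isSymmetric a b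
  have hxCu : ⟪x, C u⟫_ℂ = (L : ℂ) := by
    rw [← hsym x u, ← hu, inner_self_eq_norm_sq_to_K, hL]
    norm_cast
  have huCx : ⟪u, C x⟫_ℂ = (L : ℂ) := by
    rw [← hu, inner_self_eq_norm_sq_to_K, hL, hu]
    norm_cast
  have key : ∀ t : ℝ, 0 < t → 2 * L ≤ t * K := by
    intro t ht
    have hpos := hCpos (x - (t : ℂ) • u)
    have hexp : ⟪x - (t : ℂ) • u, C (x - (t : ℂ) • u)⟫_ℂ
        = ⟪x, C x⟫_ℂ - (t : ℂ) * ⟪x, C u⟫_ℂ - (t : ℂ) * ⟪u, C x⟫_ℂ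
          + (t : ℂ) * (t : ℂ) * ⟪u, C u⟫_ℂ := by
      rw [map_sub, map_smul, inner_sub_left, inner_sub_right, inner_sub_right,
        inner_smul_left, inner_smul_right, inner_smul_left, inner_smul_right,
        Complex.conj_ofReal]
      ring
    have huu : ⟪u, C u⟫_ℂ = (K : ℂ) := by rw [aux_inner_real C hC u, hK]
    rw [hexp, hx, hxCu, huCx, huu] at hpos
    rw [show (0 : ℂ) - (t:ℂ)*(L:ℂ) - (t:ℂ)*(L:ℂ) + (t:ℂ)*(t:ℂ)*(K:ℂ)
        = ((0 - t*L - t*L + t*t*K : ℝ) : ℂ) by push_cast; ring, Complex.ofReal_re] at hpos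
    nlinarith [hpos, ht]
  have hLnn : 0 ≤ L := by positivity
  rcases eq_or_lt_of_le hLnn with h0 | h0
  · have h3 : ‖C x‖ = 0 := by nlinarith [norm_nonneg (C x)]
    exact norm_eq_zero.mp h3
  · exfalso
    have ht : 0 < L / (K + 1) := by positivity
    have h1 := key _ ht
    have h2 : L / (K + 1) * K ≤ L := by
      rw [div_mul_eq_mul_div, div_le_iff₀ (by linarith)]
      nlinarith
    linarith

private lemma aux_spectrum_subset (D : H →L[ℂ] H) (hD : IsSelfAdjoint D)
    (ψ : H) (hψ : ‖ψ‖ = 1) (lamD : ℝ) (hDψ : D ψ = lamD • ψ)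
    (ω : ℝ) (hω : 0 < ω) (hlamDω : lamD < ω)
    (hgap : ∀ v : H, ⟪ψ, v⟫_ℂ = 0 → ω * ‖v‖ ^ 2 ≤ (⟪v, D v⟫_ℂ).re) :
    ∀ μ ∈ spectrum ℝ D, μ = lamD ∨ ω ≤ μ := by
  intro μ hμ
  by_contra hcon
  push_neg at hcon
  obtain ⟨hne, hlt⟩ := hcon
  rw [spectrum.mem_iff] at hμ
  apply hμ
  set T : H →L[ℂ] H := algebraMap ℝ (H →L[ℂ] H) μ - D with hTdef
  have hT : IsSelfAdjoint T := (IsSelfAdjoint.algebraMap _ (IsSelfAdjoint.all μ)).sub hD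
  have hTapp : ∀ v : H, T v = (μ : ℂ) • v - D v := by
    intro v
    rw [hTdef, ContinuousLinearMap.sub_apply]
    congr 1
  set c := min (|μ - lamD|) (ω - μ) with hcdef
  have hc : 0 < c := lt_min (abs_pos.mpr (sub_ne_zero.mpr hne)) (by linarith)
  apply aux_isUnit_of_bddBelow T hT hc
  intro v
  set α := ⟪ψ, v⟫_ℂ with hα
  set w := v - α • ψ with hwdef
  have hψψ : ⟪ψ, ψ⟫_ℂ = 1 := by
    rw [inner_self_eq_norm_sq_to_K, hψ]; norm_num
  have hw : ⟪ψ, w⟫_ℂ = 0 := by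
    rw [hwdef, inner_sub_right, inner_smul_right, hψψ, mul_one, sub_self]
  have hvw : v = α • ψ + w := by rw [hwdef]; abel
  have hsym : ∀ x y : H, ⟪D x, y⟫_ℂ = ⟪x, D y⟫_ℂ := fun x y => hD.isSymmetric x y
  have hDψc : D ψ = (lamD : ℂ) • ψ := by
    rw [hDψ, ← algebraMap_smul ℂ lamD ψ]; norm_num
  have hDψw : ⟪ψ, D w⟫_ℂ = 0 := by
    rw [← hsym ψ w, hDψc, inner_smul_left, hw, mul_zero]
  have hTw : ⟪ψ, T w⟫_ℂ = 0 := by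
    rw [hTapp, inner_sub_right, inner_smul_right, hw, hDψw, mul_zero, sub_self]
  have hTψ : T ψ = ((μ - lamD : ℝ) : ℂ) • ψ := by
    rw [hTapp, hDψc, ← sub_smul]
    norm_num
  have hTv : T v = (α * ((μ - lamD : ℝ) : ℂ)) • ψ + T w := by
    conv_lhs => rw [hvw]
    rw [map_add, map_smul, hTψ, smul_smul]
  have horth : ⟪(α * ((μ - lamD : ℝ) : ℂ)) • ψ, T w⟫_ℂ = 0 := by
    rw [inner_smul_left, hTw, mul_zero]
  have hpyth : ‖T v‖ ^ 2 = ‖α‖ ^ 2 * (μ - lamD) ^ 2 + ‖T w‖ ^ 2 := by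
    rw [hTv, norm_add_sq (𝕜 := ℂ), horth, map_zero, norm_smul, norm_mul,
      Complex.norm_real, hψ, mul_one, mul_zero, add_zero, mul_pow, Real.norm_eq_abs, sq_abs]
  have horth2 : ⟪α • ψ, w⟫_ℂ = 0 := by rw [inner_smul_left, hw, mul_zero]
  have hvnorm : ‖v‖ ^ 2 = ‖α‖ ^ 2 + ‖w‖ ^ 2 := by
    conv_lhs => rw [hvw]
    rw [norm_add_sq (𝕜 := ℂ), horth2, map_zero, norm_smul, hψ, mul_one, mul_zero, add_zero]
  have hTwbound : (ω - μ) * ‖w‖ ≤ ‖T w‖ := by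
    rcases eq_or_ne w 0 with h0 | h0
    · simp [h0]
    · have hwpos : 0 < ‖w‖ := norm_pos_iff.mpr h0
      have hgapw := hgap w hw
      have hww : ⟪w, w⟫_ℂ = ((‖w‖ ^ 2 : ℝ) : ℂ) := by
        rw [inner_self_eq_norm_sq_to_K]; norm_cast
      have hre : (⟪w, T w⟫_ℂ).re = μ * ‖w‖ ^ 2 - (⟪w, D w⟫_ℂ).re := by
        rw [hTapp, inner_sub_right, inner_smul_right, hww, ← Complex.ofReal_mul,
          Complex.sub_re, Complex.ofReal_re]
      have h1 : (ω - μ) * ‖w‖ ^ 2 ≤ -(⟪w, T w⟫_ℂ).re := by nlinarith [hgapw]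
      have h2 : -(⟪w, T w⟫_ℂ).re ≤ ‖w‖ * ‖T w‖ := by
        have ha := norm_inner_le_norm (𝕜 := ℂ) w (T w)
        have hb : |(⟪w, T w⟫_ℂ).re| ≤ ‖⟪w, T w⟫_ℂ‖ := Complex.abs_re_le_norm _
        have hcn : -(⟪w, T w⟫_ℂ).re ≤ |(⟪w, T w⟫_ℂ).re| := neg_le_abs _
        linarith
      nlinarith [h1, h2, hwpos]
  have e1 : c ^ 2 ≤ (μ - lamD) ^ 2 := by
    calc c ^ 2 ≤ |μ - lamD| ^ 2 := by
          apply pow_le_pow_left₀ hc.le (min_le_left _ _)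
      _ = (μ - lamD) ^ 2 := sq_abs _
  have e2 : c * ‖w‖ ≤ ‖T w‖ :=
    le_trans (mul_le_mul_of_nonneg_right (min_le_right _ _) (norm_nonneg w)) hTwbound
  have e3 : c ^ 2 * ‖w‖ ^ 2 ≤ ‖T w‖ ^ 2 := by
    have := pow_le_pow_left₀ (by positivity) e2 2
    rwa [mul_pow] at this
  have e4 : c ^ 2 * ‖α‖ ^ 2 ≤ (μ - lamD) ^ 2 * ‖α‖ ^ 2 :=
    mul_le_mul_of_nonneg_right e1 (sq_nonneg _)
  have hsq : (c * ‖v‖) ^ 2 ≤ ‖T v‖ ^ 2 := by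
    have hx : (c * ‖v‖) ^ 2 = c ^ 2 * ‖α‖ ^ 2 + c ^ 2 * ‖w‖ ^ 2 := by
      rw [mul_pow, hvnorm]; ring
    rw [hx, hpyth]
    nlinarith [e3, e4]
  have := Real.sqrt_le_sqrt hsq
  rwa [Real.sqrt_sq (by positivity), Real.sqrt_sq (norm_nonneg _)] at this


private lemma aux_quad (lam : ℂ) (hlam : lam.im ≠ 0) (a b cc s c0 : ℝ)
    (ha : 0 < a) (hs : 0 ≤ s) (hb : b = s + c0 * cc)
    (heq : (a : ℂ) + lam * (b : ℂ) + (lam * lam) * (cc : ℂ) = 0) :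
    lam.re ≤ -c0 / 2 := by
  have him := congrArg Complex.im heq
  have hre := congrArg Complex.re heq
  simp only [Complex.add_im, Complex.add_re, Complex.mul_im, Complex.mul_re,
    Complex.ofReal_re, Complex.ofReal_im, Complex.zero_im, Complex.zero_re,
    mul_zero, zero_mul, add_zero, sub_zero, zero_add] at him hre
  have key1 : b + 2 * lam.re * cc = 0 := by
    have hfac : lam.im * (b + 2 * lam.re * cc) = 0 := by nlinarith [him]
    rcases mul_eq_zero.mp hfac with h | h
    · exact absurd h hlam
    · exact h
  have key2 : a + lam.re * b + (lam.re ^ 2 - lam.im ^ 2) * cc = 0 := by nlinarith [hre]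
  have hacc : a = (lam.re ^ 2 + lam.im ^ 2) * cc := by
    linear_combination key2 - lam.re * key1
  have himsq : 0 < lam.im ^ 2 := by positivity
  have hccpos : 0 < cc := by nlinarith [hacc, ha, sq_nonneg lam.re, himsq]
  nlinarith [key1, hccpos, hs, hb]


end Aux

/-- Lemma 2.4 (complex-bound): with `D` bounded self-adjoint invertible having simple
negative ground state `D ψ = lamD • ψ` (`‖ψ‖ = 1`, `lamD < 0`) and spectral gap
`Re ⟪D v, v⟫ ≥ ω ‖v‖²` on `{ψ}⊥` (`ω > 0`), `C` bounded self-adjoint positive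
semidefinite, and `M := cfc f D` for a continuous monotone nondecreasing `f ≥ βlo > 0`
(`βlo` plays the role of β₋), every non-real eigenvalue `lam` of the block operator
`L(p, q) = (D q, -C p - M q)` satisfies `Re lam ≤ -f(lamD)/2 ≤ -βlo/2`. -/
theorem complex_eigenvalue_bound
    {H : Type*} [NormedAddCommGroup H] [InnerProductSpace ℂ H] [CompleteSpace H]
    (D Dinv : H →L[ℂ] H) (hD : IsSelfAdjoint D)
    (hD1 : D.comp Dinv = ContinuousLinearMap.id ℂ H)
    (hD2 : Dinv.comp D = ContinuousLinearMap.id ℂ H)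
    (ψ : H) (hψ : ‖ψ‖ = 1) (lamD : ℝ) (hlamD : lamD < 0) (hDψ : D ψ = lamD • ψ)
    (ω : ℝ) (hω : 0 < ω)
    (hgap : ∀ v : H, ⟪ψ, v⟫_ℂ = 0 → ω * ‖v‖ ^ 2 ≤ (⟪v, D v⟫_ℂ).re)
    (C : H →L[ℂ] H) (hC : IsSelfAdjoint C)
    (hCpos : ∀ u : H, 0 ≤ (⟪u, C u⟫_ℂ).re)
    (βlo : ℝ) (hβlo : 0 < βlo)
    (f : ℝ → ℝ) (hf : Continuous f) (hmono : Monotone f) (hfl : ∀ t : ℝ, βlo ≤ f t)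
    (lam : ℂ) (hlam : lam.im ≠ 0)
    (P₁ P₂ : H) (hP : (P₁, P₂) ≠ (0, 0))
    (h1 : D P₂ = lam • P₁) (h2 : -C P₁ - (cfc f D) P₂ = lam • P₂) :
    lam.re ≤ -(f lamD) / 2 ∧ -(f lamD) / 2 ≤ -βlo / 2 := by
  have hsecond : -(f lamD) / 2 ≤ -βlo / 2 := by linarith [hfl lamD]
  refine ⟨?_, hsecond⟩
  -- basic facts
  have hmul1 : D * Dinv = 1 := hD1
  have hmul2 : Dinv * D = 1 := hD2
  have hlam0 : lam ≠ 0 := fun h => hlam (by simp [h])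
  have hM : IsSelfAdjoint (cfc f D) := cfc_predicate f D
  have hP₂ne : P₂ ≠ 0 := by
    intro h
    rw [h, map_zero] at h1
    have hP₁ : P₁ = 0 := by
      rcases smul_eq_zero.mp h1.symm with h' | h'
      · exact absurd h' hlam0
      · exact h'
    exact hP (by rw [hP₁, h])
  have hP₂eq : P₂ = lam • Dinv P₁ := by
    have h' := congrArg Dinv h1
    rw [map_smul] at h'
    have h'' : Dinv (D P₂) = P₂ := by
      rw [← ContinuousLinearMap.comp_apply, hD2, ContinuousLinearMap.id_apply]
    rw [← h'', h']
  have hDinv : IsSelfAdjoint Dinv := by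
    have hstar := congrArg star hmul1
    rw [star_mul, star_one, hD.star_eq] at hstar
    calc star Dinv = star Dinv * (D * Dinv) := by rw [hmul1, mul_one]
      _ = star Dinv * D * Dinv := by rw [mul_assoc]
      _ = Dinv := by rw [hstar, one_mul]
  -- case split on ⟪P₁, C P₁⟫
  by_cases hA : ⟪P₁, C P₁⟫_ℂ = 0
  · -- then C P₁ = 0 and lam is an eigenvalue of the self-adjoint -cfc f D
    exfalso
    have hCP₁ : C P₁ = 0 := aux_pos_inner_zero C hC hCpos P₁ hA
    have hMP₂ : (cfc f D) P₂ = (-lam) • P₂ := by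
      have := h2
      rw [hCP₁] at this
      rw [neg_zero, zero_sub, neg_eq_iff_eq_neg] at this
      rw [this, neg_smul]
    have hval : ⟪P₂, (cfc f D) P₂⟫_ℂ = -lam * ((‖P₂‖ ^ 2 : ℝ) : ℂ) := by
      rw [hMP₂, inner_smul_right, inner_self_eq_norm_sq_to_K]
      norm_cast
    have hre := aux_inner_real _ hM P₂
    rw [hval] at hre
    have him := congrArg Complex.im hre
    simp only [Complex.mul_im, Complex.neg_re, Complex.neg_im, Complex.ofReal_re,
      Complex.ofReal_im, mul_zero, zero_add, Complex.ofReal_im] at him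
    -- him : -lam.im * ‖P₂‖ ^ 2 = 0 (in some form)
    have hnorm : ‖P₂‖ ≠ 0 := norm_ne_zero_iff.mpr hP₂ne
    apply hlam
    have h' : lam.im * ‖P₂‖ ^ 2 = 0 := by linarith [him]
    rcases mul_eq_zero.mp h' with h | h
    · exact h
    · exact absurd h (by positivity)
  · -- main case
    -- the quadratic equation
    have heq : C P₁ + lam • ((cfc f D) (Dinv P₁)) + (lam * lam) • Dinv P₁ = 0 := by
      have h2' := h2
      rw [hP₂eq, map_smul, smul_smul] at h2'
      rw [← h2']
      abel
    have hinner : ⟪P₁, C P₁⟫_ℂ + lam * ⟪P₁, (cfc f D) (Dinv P₁)⟫_ℂ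
        + (lam * lam) * ⟪P₁, Dinv P₁⟫_ℂ = 0 := by
      have h' := congrArg (fun z => ⟪P₁, z⟫_ℂ) heq
      simpa [inner_add_right, inner_smul_right] using h'
    -- spectrum facts
    have hspec := aux_spectrum_subset D hD ψ hψ lamD hDψ ω hω (by linarith) hgap
    have hDunit : IsUnit D := ⟨⟨D, Dinv, hmul1, hmul2⟩, rfl⟩
    have h0spec : (0 : ℝ) ∉ spectrum ℝ D := spectrum.zero_notMem ℝ hDunit
    have hspec0 : ∀ t ∈ spectrum ℝ D, t ≠ 0 := fun t ht h => h0spec (h ▸ ht)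
    set g : ℝ → ℝ := fun t => (f t - f lamD) / t with hgdef
    have hgcont : ContinuousOn g (spectrum ℝ D) := by
      intro t ht
      exact (ContinuousAt.div ((hf.sub continuous_const).continuousAt)
        continuousAt_id (hspec0 t ht)).continuousWithinAt
    have hgnn : ∀ t ∈ spectrum ℝ D, 0 ≤ g t := by
      intro t ht
      rcases hspec t ht with h | h
      · simp [hgdef, h]
      · have h1' : 0 < t := lt_of_lt_of_le hω h
        have h2' : f lamD ≤ f t := hmono (by linarith)
        exact div_nonneg (by linarith) h1'.le
    set gs : ℝ → ℝ := fun t => Real.sqrt (g t) with hgsdef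
    have hgscont : ContinuousOn gs (spectrum ℝ D) := Real.continuous_sqrt.comp_continuousOn hgcont
    set S := cfc gs D with hSdef
    have hSsa : IsSelfAdjoint S := cfc_predicate gs D
    set N := cfc g D with hNdef
    have hSS : S * S = N := by
      rw [hSdef, hNdef, ← cfc_mul gs gs D hgscont hgscont]
      exact cfc_congr fun t ht => Real.mul_self_sqrt (hgnn t ht)
    have hND : N * D = cfc f D - algebraMap ℝ (H →L[ℂ] H) (f lamD) := by
      calc N * D = cfc g D * cfc (fun t : ℝ => t) D := by rw [hNdef, cfc_id' ℝ D]
        _ = cfc (fun t => g t * t) D := (cfc_mul g (fun t : ℝ => t) D hgcont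
              (continuous_id.continuousOn)).symm
        _ = cfc (fun t => f t - f lamD) D := cfc_congr fun t ht => by
              rw [hgdef]
              exact div_mul_cancel₀ _ (hspec0 t ht)
        _ = cfc f D - cfc (fun _ => f lamD) D := cfc_sub f (fun _ => f lamD) D
              hf.continuousOn continuousOn_const
        _ = cfc f D - algebraMap ℝ (H →L[ℂ] H) (f lamD) := by rw [cfc_const (f lamD) D]
    have hMDinv : ∀ x : H, (cfc f D) (Dinv x) = N x + ((f lamD : ℝ) : ℂ) • Dinv x := by
      intro x
      have hcomp : N = cfc f D * Dinv - algebraMap ℝ (H →L[ℂ] H) (f lamD) * Dinv := by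
        have h' : N = N * D * Dinv := by rw [mul_assoc, hmul1, mul_one]
        rw [h', hND, sub_mul]
      have happ := congrArg (fun (T : H →L[ℂ] H) => T x) hcomp
      simp only [ContinuousLinearMap.sub_apply, ContinuousLinearMap.mul_apply] at happ
      have halg : (algebraMap ℝ (H →L[ℂ] H) (f lamD)) (Dinv x) = ((f lamD : ℝ) : ℂ) • Dinv x := by
        rw [Algebra.algebraMap_eq_smul_one, ContinuousLinearMap.smul_apply,
          ContinuousLinearMap.one_apply]
        norm_num
      rw [halg] at happ
      rw [happ]
      abel
    have hNP₁ : ⟪P₁, N P₁⟫_ℂ = ((‖S P₁‖ ^ 2 : ℝ) : ℂ) := by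
      rw [← hSS, ContinuousLinearMap.mul_apply]
      have hsymS : ⟪S P₁, S P₁⟫_ℂ = ⟪P₁, S (S P₁)⟫_ℂ := hSsa.isSymmetric P₁ (S P₁)
      rw [← hsymS, inner_self_eq_norm_sq_to_K]
      norm_cast
    -- real parameters
    set a : ℝ := (⟪P₁, C P₁⟫_ℂ).re with hadef
    set cc : ℝ := (⟪P₁, Dinv P₁⟫_ℂ).re with hccdef
    set s : ℝ := ‖S P₁‖ ^ 2 with hsdef
    have hareal : ⟪P₁, C P₁⟫_ℂ = (a : ℂ) := aux_inner_real C hC P₁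
    have hccreal : ⟪P₁, Dinv P₁⟫_ℂ = (cc : ℂ) := aux_inner_real Dinv hDinv P₁
    have hBval : ⟪P₁, (cfc f D) (Dinv P₁)⟫_ℂ = ((s + f lamD * cc : ℝ) : ℂ) := by
      rw [hMDinv P₁, inner_add_right, inner_smul_right, hNP₁, hccreal]
      push_cast
      ring
    have hinner' : (a : ℂ) + lam * ((s + f lamD * cc : ℝ) : ℂ) + (lam * lam) * (cc : ℂ) = 0 := by
      rw [← hareal, ← hBval, ← hccreal]
      exact hinner
    have hann : 0 ≤ a := hCpos P₁
    have hapos : 0 < a := by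
      rcases eq_or_lt_of_le hann with h | h
      · exact absurd (by rw [hareal, ← h]; norm_num) hA
      · exact h
    have hsnn : 0 ≤ s := by positivity
    exact aux_quad lam hlam a (s + f lamD * cc) cc s (f lamD) hapos hsnn rfl hinner'
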